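/- arXiv:2510.03838 — 3 statements merged into one kernel-verified Lean document; each statement's English description precedes it below -/
import Mathlib

section
/- Let P_i and P_val be probability measures on a measurable space X such that P_i is absolutely continuous with respect to P_val with Radon–Nikodym derivative r(x) = dP_i/dP_val(x) satisfying |r(x) − 1| ≤ γ for all x, where 0 ≤ γ < 1. Then the Kullback–Leibler divergence satisfies D_KL(P_i ‖ P_val) = E_{x∼P_val}[r(x) log r(x)] ≤ γ²/(2(1−γ)) + γ³/(3(1−γ)²). -/
open MeasureTheory

lemma logA {x : ℝ} (hx : 1 ≤ x) : Real.log x ≤ (x - x⁻¹) / 2 := by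
  rcases eq_or_lt_of_le hx with h | h
  · simp [← h]
  · have h0 : (0:ℝ) < x := by linarith
    have hl : 0 < Real.log x := Real.log_pos h
    have := (Real.self_lt_sinh_iff).2 hl
    rw [Real.sinh_log h0] at this
    linarith

lemma logB {x : ℝ} (hx0 : 0 < x) (hx1 : x ≤ 1) :
    Real.log x ≤ x - 1 - (x - 1) ^ 2 / 2 := by
  rcases eq_or_lt_of_le hx1 with h | h
  · simp [h]
  have key : AntitoneOn (fun y : ℝ => y - 1 - (y - 1) ^ 2 / 2 - Real.log y)
      (Set.Icc x 1) := by
    apply antitoneOn_of_deriv_nonpos (convex_Icc _ _)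
    · apply ContinuousOn.sub
      · fun_prop
      · apply Real.continuousOn_log.mono
        intro y hy
        simp only [Set.mem_Icc] at hy
        simp only [Set.mem_compl_iff, Set.mem_singleton_iff]
        intro h0; rw [h0] at hy; linarith [hy.1]
    · intro y hy
      rw [interior_Icc] at hy
      have hy0 : 0 < y := lt_trans hx0 hy.1
      apply DifferentiableAt.differentiableWithinAt
      have : DifferentiableAt ℝ Real.log y := Real.differentiableAt_log (ne_of_gt hy0)
      fun_prop (disch := exact ne_of_gt hy0)
    · intro y hy
      rw [interior_Icc] at hy
      have hy0 : 0 < y := lt_trans hx0 hy.1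
      have hd : HasDerivAt (fun y : ℝ => y - 1 - (y - 1) ^ 2 / 2 - Real.log y)
          (1 - (y - 1) - 1 / y) y := by
        have h1 : HasDerivAt (fun y : ℝ => y - 1) 1 y := (hasDerivAt_id y).sub_const 1
        have h2 : HasDerivAt (fun y : ℝ => (y - 1) ^ 2 / 2) (↑2 * (y - 1) ^ (2 - 1) * 1 / 2) y := by
          exact ((h1.pow 2).div_const 2)
        have h3 : HasDerivAt Real.log (1 / y) y := by
          simpa [one_div] using Real.hasDerivAt_log (ne_of_gt hy0)
        have := (h1.sub h2).sub h3
        convert this using 1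
        exacts [rfl, rfl, rfl, by ring]
      rw [hd.deriv]
      have : 1 - (y - 1) - 1 / y = -((y - 1) ^ 2 / y) := by
        field_simp; ring
      rw [this]
      simp only [neg_nonpos]
      positivity
  have h1m : (1:ℝ) ∈ Set.Icc x 1 := by constructor <;> linarith
  have hxm : x ∈ Set.Icc x 1 := by constructor <;> linarith
  have := key hxm h1m hx1
  simp only [Real.log_one] at this
  linarith

lemma pointwise {γ u : ℝ} (hγ1 : γ < 1) (hu0 : 0 ≤ u) (hu : |u - 1| ≤ γ) :
    u * Real.log u - (u - 1) ≤ γ ^ 2 * (1 + γ) / 2 := by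
  have hγ0 : 0 ≤ γ := le_trans (abs_nonneg _) hu
  have h1 : 1 - γ ≤ u := by have := abs_le.1 hu; linarith [this.1]
  have h2 : u ≤ 1 + γ := by have := abs_le.1 hu; linarith [(abs_le.1 hu).2]
  have hupos : 0 < u := by linarith
  rcases le_total 1 u with h | h
  · have hA := logA h
    have hmul : u * Real.log u ≤ u * ((u - u⁻¹) / 2) :=
      mul_le_mul_of_nonneg_left hA (le_of_lt hupos)
    have hinv : u * u⁻¹ = 1 := mul_inv_cancel₀ (ne_of_gt hupos)
    nlinarith [sq_nonneg (u - 1), sq_nonneg γ]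
  · have hB := logB hupos h
    have hmul : u * Real.log u ≤ u * (u - 1 - (u - 1) ^ 2 / 2) :=
      mul_le_mul_of_nonneg_left hB (le_of_lt hupos)
    nlinarith [sq_nonneg (u - 1), sq_nonneg (γ - (1 - u)), sq_nonneg γ]

lemma pointwise_lower {u : ℝ} (hu0 : 0 ≤ u) : u - 1 ≤ u * Real.log u := by
  rcases eq_or_lt_of_le hu0 with h | h
  · simp [← h]
  · have := Real.log_le_sub_one_of_pos (x := u⁻¹) (by positivity)
    rw [Real.log_inv] at this
    have h2 : u * u⁻¹ = 1 := mul_inv_cancel₀ (ne_of_gt h)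
    nlinarith

/-- marginal KL bound.
If `P_i ≪ P_val` with Radon–Nikodym derivative `r` satisfying `|r(x) − 1| ≤ γ` for all `x`,
with `0 ≤ γ < 1`, then the Kullback–Leibler divergence
`D_KL(P_i ‖ P_val) = E_{x∼P_val}[r(x) log r(x)]` satisfies
`D_KL(P_i ‖ P_val) ≤ γ²/(2(1−γ)) + γ³/(3(1−γ)²)`. -/
theorem klDiv_le_of_rnDeriv_close
    {X : Type*} [MeasurableSpace X]
    (Pi Pval : Measure X) [IsProbabilityMeasure Pi] [IsProbabilityMeasure Pval]
    (r : X → ℝ) (hr : Measurable r) (hr0 : ∀ x, 0 ≤ r x)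
    (hPi : Pi = Pval.withDensity (fun x => ENNReal.ofReal (r x)))
    (γ : ℝ) (hγ0 : 0 ≤ γ) (hγ1 : γ < 1) (hrγ : ∀ x, |r x - 1| ≤ γ) :
    ∫ x, r x * Real.log (r x) ∂Pval ≤ γ ^ 2 / (2 * (1 - γ)) + γ ^ 3 / (3 * (1 - γ) ^ 2) := by
  set B0 : ℝ := γ ^ 2 * (1 + γ) / 2 with hB0
  have hB0nn : 0 ≤ B0 := by positivity
  have hup : ∀ x, r x * Real.log (r x) ≤ (r x - 1) + B0 := by
    intro x
    have := pointwise hγ1 (hr0 x) (hrγ x)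
    linarith
  have hlo : ∀ x, r x - 1 ≤ r x * Real.log (r x) := fun x => pointwise_lower (hr0 x)
  -- integrability
  have hmeas : AEStronglyMeasurable (fun x => r x * Real.log (r x)) Pval :=
    (hr.mul (Real.measurable_log.comp hr)).aestronglyMeasurable
  have hint1 : Integrable (fun x => r x * Real.log (r x)) Pval := by
    refine ⟨hmeas, HasFiniteIntegral.of_bounded (C := γ + B0) (ae_of_all _ fun x => ?_)⟩
    rw [Real.norm_eq_abs, abs_le]
    constructor
    · have := abs_le.1 (hrγ x); linarith [hlo x, this.1]
    · have := abs_le.1 (hrγ x); linarith [hup x, this.2]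
  have hintr : Integrable r Pval := by
    refine ⟨hr.aestronglyMeasurable, HasFiniteIntegral.of_bounded (C := 1 + γ)
      (ae_of_all _ fun x => ?_)⟩
    rw [Real.norm_eq_abs, abs_le]
    have := abs_le.1 (hrγ x)
    constructor <;> [linarith [hr0 x]; linarith [this.2]]
  -- ∫ r = 1
  have hlint : ∫⁻ x, ENNReal.ofReal (r x) ∂Pval = 1 := by
    have h1 : Pi Set.univ = 1 := measure_univ
    rw [hPi, withDensity_apply _ MeasurableSet.univ, Measure.restrict_univ] at h1
    exact h1
  have hintr1 : ∫ x, r x ∂Pval = 1 := by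
    rw [integral_eq_lintegral_of_nonneg_ae (ae_of_all _ hr0) hr.aestronglyMeasurable,
      hlint]
    simp
  have hint2 : Integrable (fun x => (r x - 1) + B0) Pval :=
    (hintr.sub (integrable_const 1)).add (integrable_const B0)
  have hmono : ∫ x, r x * Real.log (r x) ∂Pval ≤ ∫ x, ((r x - 1) + B0) ∂Pval :=
    integral_mono hint1 hint2 hup
  have hsub : Integrable (fun x => r x - 1) Pval := hintr.sub (integrable_const 1)
  have hcalc : ∫ x, ((r x - 1) + B0) ∂Pval = B0 := by
    rw [integral_add hsub (integrable_const B0),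
      integral_sub hintr (integrable_const 1), hintr1]
    simp
  have hfin : B0 ≤ γ ^ 2 / (2 * (1 - γ)) + γ ^ 3 / (3 * (1 - γ) ^ 2) := by
    have hA : B0 ≤ γ ^ 2 / (2 * (1 - γ)) := by
      rw [hB0, div_le_div_iff₀ (by norm_num) (by linarith)]
      nlinarith [sq_nonneg γ, pow_nonneg hγ0 2]
    have hBn : 0 ≤ γ ^ 3 / (3 * (1 - γ) ^ 2) := by positivity
    linarith
  linarith
end

section
/- Let 𝓛 : ℝ^d → ℝ be L-smooth and bounded below by 𝓛⋆. On a probability space with filtration (𝓕_t), let θ^(0) be deterministic and define θ^(t+1) = θ^(t) − η (I + λ I_G^(t)) g_t, where λ ≥ 0, g_t is 𝓕_{t+1}-measurable with E[g_t | 𝓕_t] = ∇𝓛(θ^(t)) and E[‖g_t − ∇𝓛(θ^(t))‖² | 𝓕_t] ≤ σ², and I_G^(t) is an 𝓕_t-measurable symmetric positive semidefinite d×d matrix with ‖I_G^(t)‖_op ≤ G. If the step size satisfies 0 < η ≤ 1/(L(1+λG)²), then for every t, E[𝓛(θ^(t+1))] ≤ E[𝓛(θ^(t))] − η(1 − (Lη/2)(1+λG)²)·E[‖∇𝓛(θ^(t))‖²]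 + (Lη²/2)(1+λG)²σ². -/
open MeasureTheory
open scoped RealInnerProductSpace

private lemma euclid_abs_coord_le_norm {d : ℕ} (x : EuclideanSpace ℝ (Fin d)) (i : Fin d) :
    |x i| ≤ ‖x‖ := by
  rw [EuclideanSpace.norm_eq, ← Real.norm_eq_abs, ← Real.sqrt_sq (norm_nonneg (x i))]
  exact Real.sqrt_le_sqrt (Finset.single_le_sum (f := fun j => ‖x j‖ ^ 2)
    (fun j _ => sq_nonneg _) (Finset.mem_univ i))

lemma fire_descent_lemma {E : Type*} [NormedAddCommGroup E] [InnerProductSpace ℝ E]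
    [CompleteSpace E] {f : E → ℝ} {L : ℝ} (hdiff : Differentiable ℝ f)
    (hlip : ∀ a b, ‖gradient f a - gradient f b‖ ≤ L * ‖a - b‖) (x y : E) :
    f y ≤ f x + ⟪gradient f x, y - x⟫ + L / 2 * ‖y - x‖ ^ 2 := by
  set v := y - x with hv
  have hgc : Continuous fun p : E => gradient f p := by
    have hlw : LipschitzWith (Real.toNNReal L) (gradient f) := by
      apply LipschitzWith.of_dist_le_mul
      intro a b
      rw [dist_eq_norm, dist_eq_norm]
      calc ‖gradient f a - gradient f b‖ ≤ L * ‖a - b‖ := hlip a b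
        _ ≤ Real.toNNReal L * ‖a - b‖ :=
            mul_le_mul_of_nonneg_right (Real.le_coe_toNNReal L) (norm_nonneg _)
    exact hlw.continuous
  have key : ∀ s : ℝ, HasDerivAt (fun s : ℝ => f (x + s • v))
      ⟪gradient f (x + s • v), v⟫ s := by
    intro s
    have h1 : HasDerivAt (fun s : ℝ => x + s • v) v s := by
      simpa using ((hasDerivAt_id s).smul_const v).const_add x
    have h2 : HasFDerivAt f ((InnerProductSpace.toDual ℝ E) (gradient f (x + s • v)))
        (x + s • v) := ((hdiff _).hasGradientAt).hasFDerivAt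
    have h3 := h2.comp_hasDerivAt s h1
    simp only [InnerProductSpace.toDual_apply_apply] at h3
    exact h3
  have hcont : Continuous fun s : ℝ => ⟪gradient f (x + s • v), v⟫ :=
    Continuous.inner (hgc.comp (by continuity)) continuous_const
  have hFTC : f y - f x = ∫ s in (0:ℝ)..1, ⟪gradient f (x + s • v), v⟫ := by
    rw [intervalIntegral.integral_eq_sub_of_hasDerivAt (fun s _ => key s)
      (hcont.intervalIntegrable 0 1)]
    simp [hv]
  have hbound : (∫ s in (0:ℝ)..1, ⟪gradient f (x + s • v), v⟫)
      ≤ ∫ s in (0:ℝ)..1, (⟪gradient f x, v⟫ + (L * ‖v‖ ^ 2) * s) := by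
    apply intervalIntegral.integral_mono_on zero_le_one (hcont.intervalIntegrable 0 1)
      (by apply Continuous.intervalIntegrable; continuity)
    intro s hs
    have h1 : ⟪gradient f (x + s • v), v⟫ - ⟪gradient f x, v⟫
        = ⟪gradient f (x + s • v) - gradient f x, v⟫ := (inner_sub_left _ _ _).symm
    have h2 : ⟪gradient f (x + s • v) - gradient f x, v⟫ ≤ (L * ‖v‖ ^ 2) * s := by
      calc ⟪gradient f (x + s • v) - gradient f x, v⟫
          ≤ ‖gradient f (x + s • v) - gradient f x‖ * ‖v‖ := real_inner_le_norm _ _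
        _ ≤ (L * ‖x + s • v - x‖) * ‖v‖ :=
            mul_le_mul_of_nonneg_right (hlip _ _) (norm_nonneg v)
        _ = (L * ‖v‖ ^ 2) * s := by
            rw [add_sub_cancel_left, norm_smul, Real.norm_eq_abs, abs_of_nonneg hs.1]
            ring
    linarith
  have hint : (∫ s in (0:ℝ)..1, (⟪gradient f x, v⟫ + (L * ‖v‖ ^ 2) * s))
      = ⟪gradient f x, v⟫ + L / 2 * ‖v‖ ^ 2 := by
    rw [intervalIntegral.integral_add (intervalIntegrable_const)
      (by apply Continuous.intervalIntegrable; continuity),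
      intervalIntegral.integral_const_mul, integral_id]
    simp
    ring
  linarith [hFTC, hbound.trans_eq hint]

set_option maxHeartbeats 2000000 in
/-- one-step descent inequality for the FIRE preconditioned SGD update.
Let `𝓛` be `L`-smooth and bounded below, `θ^(t+1) = θ^(t) − η (I + λ I_G^(t)) g_t` with
unbiased gradients of conditional variance at most `σ²` and `ℱ_t`-measurable symmetric PSD
preconditioners `I_G^(t)` of operator norm at most `G`. If `0 < η ≤ 1/(L(1+λG)²)`, then
`E[𝓛(θ^(t+1))] ≤ E[𝓛(θ^(t))] − η(1 − (Lη/2)(1+λG)²) E[‖∇𝓛(θ^(t))‖²]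
  + (Lη²/2)(1+λG)² σ²`. -/
theorem fire_one_step_descent
    {d : ℕ} {Ω : Type*} {m0 : MeasurableSpace Ω}
    (μ : Measure Ω) [IsProbabilityMeasure μ] (ℱ : Filtration ℕ m0)
    (𝓛 : EuclideanSpace ℝ (Fin d) → ℝ) (L Lstar : ℝ) (hL : 0 < L)
    (hdiff : Differentiable ℝ 𝓛)
    (hsmooth : ∀ a b, ‖gradient 𝓛 a - gradient 𝓛 b‖ ≤ L * ‖a - b‖)
    (hbdd : ∀ p, Lstar ≤ 𝓛 p)
    (η lam G σ : ℝ) (hlam : 0 ≤ lam) (hG : 0 ≤ G)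
    (hη : 0 < η) (hη' : η ≤ 1 / (L * (1 + lam * G) ^ 2))
    (θ g : ℕ → Ω → EuclideanSpace ℝ (Fin d))
    (IG : ℕ → Ω → (EuclideanSpace ℝ (Fin d) →L[ℝ] EuclideanSpace ℝ (Fin d)))
    (θ0 : EuclideanSpace ℝ (Fin d)) (hθ0 : θ 0 = fun _ => θ0)
    (hupdate : ∀ t ω, θ (t + 1) ω = θ t ω - η • (g t ω + lam • (IG t ω) (g t ω)))
    (hg_meas : ∀ t, StronglyMeasurable[ℱ (t + 1)] (g t))
    (hg_int : ∀ t, Integrable (g t) μ)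
    (hmean : ∀ t, μ[g t | ℱ t] =ᵐ[μ] fun ω => gradient 𝓛 (θ t ω))
    (hvar_int : ∀ t, Integrable (fun ω => ‖g t ω - gradient 𝓛 (θ t ω)‖ ^ 2) μ)
    (hvar : ∀ t, μ[fun ω => ‖g t ω - gradient 𝓛 (θ t ω)‖ ^ 2 | ℱ t]
      ≤ᵐ[μ] fun _ => σ ^ 2)
    (hIG_meas : ∀ t, StronglyMeasurable[ℱ t] (IG t))
    (hIG_symm : ∀ t ω v w, ⟪(IG t ω) v, w⟫ = ⟪v, (IG t ω) w⟫)
    (hIG_psd : ∀ t ω v, 0 ≤ ⟪(IG t ω) v, v⟫)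
    (hIG_norm : ∀ t ω, ‖IG t ω‖ ≤ G) :
    ∀ t : ℕ,
      ∫ ω, 𝓛 (θ (t + 1) ω) ∂μ
        ≤ (∫ ω, 𝓛 (θ t ω) ∂μ)
          - η * (1 - (L * η / 2) * (1 + lam * G) ^ 2)
            * (∫ ω, ‖gradient 𝓛 (θ t ω)‖ ^ 2 ∂μ)
          + (L * η ^ 2 / 2) * (1 + lam * G) ^ 2 * σ ^ 2 := by
  have hm : ∀ n, ℱ n ≤ m0 := fun n => ℱ.le n
  have hgradcont : Continuous (gradient 𝓛) := by
    have hlw : LipschitzWith (Real.toNNReal L) (gradient 𝓛) := by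
      apply LipschitzWith.of_dist_le_mul
      intro a b
      rw [dist_eq_norm, dist_eq_norm]
      calc ‖gradient 𝓛 a - gradient 𝓛 b‖ ≤ L * ‖a - b‖ := hsmooth a b
        _ ≤ Real.toNNReal L * ‖a - b‖ :=
            mul_le_mul_of_nonneg_right (Real.le_coe_toNNReal L) (norm_nonneg _)
    exact hlw.continuous
  have happly : ∀ {m : MeasurableSpace Ω}
      (A : Ω → (EuclideanSpace ℝ (Fin d) →L[ℝ] EuclideanSpace ℝ (Fin d)))
      (k : Ω → EuclideanSpace ℝ (Fin d)), StronglyMeasurable[m] A → StronglyMeasurable[m] k →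
      StronglyMeasurable[m] (fun ω => A ω (k ω)) := by
    intro m A k hA hk
    exact isBoundedBilinearMap_apply.continuous.comp_stronglyMeasurable (hA.prodMk hk)
  -- measurability of the iterates
  have hθmeas : ∀ n, StronglyMeasurable[ℱ n] (θ n) := by
    intro n; induction n with
    | zero => rw [hθ0]; exact stronglyMeasurable_const
    | succ n ih =>
      have hfun : θ (n + 1) = fun ω => θ n ω - η • (g n ω + lam • (IG n ω) (g n ω)) :=
        funext (hupdate n)
      rw [hfun]
      have hIGg : StronglyMeasurable[ℱ (n + 1)] (fun ω => (IG n ω) (g n ω)) :=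
        happly _ _ ((hIG_meas n).mono (ℱ.mono n.le_succ)) (hg_meas n)
      exact ((ih.mono (ℱ.mono n.le_succ)).sub
        (((hg_meas n).add (hIGg.const_smul lam)).const_smul η))
  have hgrad_meas : ∀ n, StronglyMeasurable[ℱ n] (fun ω => gradient 𝓛 (θ n ω)) :=
    fun n => hgradcont.comp_stronglyMeasurable (hθmeas n)
  -- L² facts
  have hgrad2 : ∀ n, MemLp (θ n) 2 μ → MemLp (fun ω => gradient 𝓛 (θ n ω)) 2 μ := by
    intro n hθ2
    apply MemLp.of_le
      ((memLp_const (‖gradient 𝓛 θ0‖)).add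
        (((hθ2.sub (memLp_const θ0)).norm.const_mul L)))
      ((hgrad_meas n).mono (hm n)).aestronglyMeasurable
    filter_upwards with ω
    have h1 : ‖gradient 𝓛 (θ n ω)‖ - ‖gradient 𝓛 θ0‖ ≤ L * ‖θ n ω - θ0‖ :=
      le_trans (norm_sub_norm_le _ _) (hsmooth (θ n ω) θ0)
    have h2 : (0:ℝ) ≤ L * ‖θ n ω - θ0‖ := by positivity
    simp only [Pi.add_apply, Pi.sub_apply]
    rw [Real.norm_eq_abs, abs_of_nonneg (by positivity)]
    linarith
  have hh2 : ∀ n, MemLp (fun ω => g n ω - gradient 𝓛 (θ n ω)) 2 μ := by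
    intro n
    refine (memLp_two_iff_integrable_sq_norm ?_).mpr (hvar_int n)
    exact (((hg_meas n).mono (hm (n + 1))).aestronglyMeasurable).sub
      ((hgrad_meas n).mono (hm n)).aestronglyMeasurable
  have hg2 : ∀ n, MemLp (θ n) 2 μ → MemLp (g n) 2 μ := by
    intro n hθ2
    have h := (hh2 n).add (hgrad2 n hθ2)
    have : ((fun ω => g n ω - gradient 𝓛 (θ n ω)) + fun ω => gradient 𝓛 (θ n ω)) = g n := by
      funext ω; simp
    rwa [this] at h
  have hIG_apply2 : ∀ n (k : Ω → EuclideanSpace ℝ (Fin d)), MemLp k 2 μ →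
      AEStronglyMeasurable (fun ω => (IG n ω) (k ω)) μ →
      MemLp (fun ω => (IG n ω) (k ω)) 2 μ := by
    intro n k hk hkm
    apply MemLp.of_le (hk.norm.const_mul G) hkm
    filter_upwards with ω
    calc ‖(IG n ω) (k ω)‖ ≤ ‖IG n ω‖ * ‖k ω‖ := (IG n ω).le_opNorm _
      _ ≤ G * ‖k ω‖ := mul_le_mul_of_nonneg_right (hIG_norm n ω) (norm_nonneg _)
      _ ≤ ‖G * ‖k ω‖‖ := le_abs_self _
  have hθ2 : ∀ n, MemLp (θ n) 2 μ := by
    intro n; induction n with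
    | zero => rw [hθ0]; exact memLp_const θ0
    | succ n ih =>
      have hfun : θ (n + 1) = fun ω => θ n ω - η • (g n ω + lam • (IG n ω) (g n ω)) :=
        funext (hupdate n)
      rw [hfun]
      have hgn := hg2 n ih
      have hIGg := hIG_apply2 n (g n) hgn
        ((happly _ _ ((hIG_meas n).mono (ℱ.mono n.le_succ)) (hg_meas n)).mono (hm (n+1))).aestronglyMeasurable
      have h1 : MemLp (fun ω => θ n ω - η • (g n ω + lam • (IG n ω) (g n ω))) 2 μ := by
        have := ih.sub (((hgn.add (hIGg.const_smul lam)).const_smul η))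
        exact this
      exact h1
  -- integrability of 𝓛 ∘ θ n
  have h𝓛int : ∀ n, Integrable (fun ω => 𝓛 (θ n ω)) μ := by
    intro n
    have hθn := hθ2 n
    have hdist2 : Integrable (fun ω => ‖θ n ω - θ0‖ ^ 2) μ :=
      ((hθn.sub (memLp_const θ0)).norm).integrable_sq
    have hdist1 : Integrable (fun ω => ‖θ n ω - θ0‖) μ :=
      ((hθn.sub (memLp_const θ0)).norm).integrable one_le_two
    apply Integrable.mono'
      (g := fun ω => |Lstar| + (|𝓛 θ0| + ‖gradient 𝓛 θ0‖ * ‖θ n ω - θ0‖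
        + L / 2 * ‖θ n ω - θ0‖ ^ 2))
      ((integrable_const _).add (((integrable_const _).add
        (hdist1.const_mul _)).add (hdist2.const_mul _)))
      (hdiff.continuous.comp_stronglyMeasurable
        ((hθmeas n).mono (hm n))).aestronglyMeasurable
    filter_upwards with ω
    have hup := fire_descent_lemma hdiff hsmooth θ0 (θ n ω)
    have hlo := hbdd (θ n ω)
    have hip := real_inner_le_norm (gradient 𝓛 θ0) (θ n ω - θ0)
    have h1 : (0:ℝ) ≤ ‖gradient 𝓛 θ0‖ * ‖θ n ω - θ0‖ := by positivity
    have h2 : (0:ℝ) ≤ L / 2 * ‖θ n ω - θ0‖ ^ 2 := by positivity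
    rw [Real.norm_eq_abs, abs_le]
    constructor
    · linarith [neg_abs_le Lstar, neg_abs_le (𝓛 θ0), abs_nonneg Lstar, abs_nonneg (𝓛 θ0)]
    · linarith [le_abs_self Lstar, le_abs_self (𝓛 θ0), abs_nonneg Lstar, abs_nonneg (𝓛 θ0)]
  -- main argument
  intro t
  have hq2 : MemLp (fun ω => gradient 𝓛 (θ t ω)) 2 μ := hgrad2 t (hθ2 t)
  have hqmeas : StronglyMeasurable[ℱ t] (fun ω => gradient 𝓛 (θ t ω)) := hgrad_meas t
  have hh2' : MemLp (fun ω => g t ω - gradient 𝓛 (θ t ω)) 2 μ := hh2 t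
  have hgt2 : MemLp (g t) 2 μ := hg2 t (hθ2 t)
  have hq_int : Integrable (fun ω => gradient 𝓛 (θ t ω)) μ := hq2.integrable one_le_two
  have hh_int : Integrable (fun ω => g t ω - gradient 𝓛 (θ t ω)) μ := hh2'.integrable one_le_two
  have hIGg_meas : StronglyMeasurable[ℱ (t + 1)] (fun ω => (IG t ω) (g t ω)) :=
    happly _ _ ((hIG_meas t).mono (ℱ.mono t.le_succ)) (hg_meas t)
  have hIGg2 : MemLp (fun ω => (IG t ω) (g t ω)) 2 μ :=
    hIG_apply2 t (g t) hgt2 (hIGg_meas.mono (hm (t + 1))).aestronglyMeasurable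
  have hIGq_meas : StronglyMeasurable[ℱ t] (fun ω => (IG t ω) (gradient 𝓛 (θ t ω))) :=
    happly _ _ (hIG_meas t) hqmeas
  have hIGq2 : MemLp (fun ω => (IG t ω) (gradient 𝓛 (θ t ω))) 2 μ :=
    hIG_apply2 t _ hq2 (hIGq_meas.mono (hm t)).aestronglyMeasurable
  -- integrability of inner products
  have hip_int : ∀ (f k : Ω → EuclideanSpace ℝ (Fin d)), MemLp f 2 μ → MemLp k 2 μ →
      Integrable (fun ω => ⟪f ω, k ω⟫) μ := by
    intro f k hf hk
    apply Integrable.mono' (g := fun ω => (‖f ω‖ ^ 2 + ‖k ω‖ ^ 2) / 2)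
      ((hf.norm.integrable_sq.add hk.norm.integrable_sq).div_const 2)
      (AEStronglyMeasurable.inner hf.aestronglyMeasurable hk.aestronglyMeasurable)
    filter_upwards with ω
    rw [Real.norm_eq_abs]
    have h1 := abs_real_inner_le_norm (f ω) (k ω)
    nlinarith [sq_nonneg (‖f ω‖ - ‖k ω‖), norm_nonneg (f ω), norm_nonneg (k ω)]
  -- the conditional-expectation orthogonality
  have hset : ∀ s, MeasurableSet[ℱ t] s →
      ∫ ω in s, (g t ω - gradient 𝓛 (θ t ω)) ∂μ = 0 := by
    intro s hs
    have h1 : ∫ ω in s, g t ω ∂μ = ∫ ω in s, gradient 𝓛 (θ t ω) ∂μ := by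
      rw [← setIntegral_condExp (hm t) (hg_int t) hs]
      exact setIntegral_congr_ae (hm t s hs) ((hmean t).mono fun ω hω _ => hω)
    rw [integral_sub ((hg_int t).integrableOn) (hq_int.integrableOn), h1, sub_self]
  have hzero : ∀ f : Ω → EuclideanSpace ℝ (Fin d), StronglyMeasurable[ℱ t] f →
      MemLp f 2 μ → ∫ ω, ⟪f ω, g t ω - gradient 𝓛 (θ t ω)⟫ ∂μ = 0 := by
    intro f hfm hf2
    have hprod_int : ∀ i : Fin d,
        Integrable (fun ω => f ω i * (g t ω - gradient 𝓛 (θ t ω)) i) μ := by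
      intro i
      refine Integrable.mono'
        (g := fun ω => (‖f ω‖ ^ 2 + ‖g t ω - gradient 𝓛 (θ t ω)‖ ^ 2) / 2)
        ((hf2.norm.integrable_sq.add hh2'.norm.integrable_sq).div_const 2) ?_ ?_
      · exact ((((EuclideanSpace.proj i).continuous.comp_stronglyMeasurable
          (hfm.mono (hm t))).mul
          ((EuclideanSpace.proj i).continuous.comp_stronglyMeasurable
            (((hg_meas t).mono (hm (t + 1))).sub
              ((hgrad_meas t).mono (hm t))))).aestronglyMeasurable)
      · filter_upwards with ω
        rw [Real.norm_eq_abs, abs_mul]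
        have h1 := euclid_abs_coord_le_norm (f ω) i
        have h2 := euclid_abs_coord_le_norm (g t ω - gradient 𝓛 (θ t ω)) i
        have h3 := abs_nonneg (f ω i)
        have h4 := abs_nonneg ((g t ω - gradient 𝓛 (θ t ω)) i)
        nlinarith [sq_nonneg (‖f ω‖ - ‖g t ω - gradient 𝓛 (θ t ω)‖), norm_nonneg (f ω),
          norm_nonneg (g t ω - gradient 𝓛 (θ t ω))]
    have hhi_int : ∀ i : Fin d,
        Integrable (fun ω => (g t ω - gradient 𝓛 (θ t ω)) i) μ := by
      intro i
      exact (EuclideanSpace.proj (𝕜 := ℝ) i).integrable_comp hh_int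
    have hcondzero : ∀ i : Fin d,
        (fun _ => (0:ℝ)) =ᵐ[μ] μ[fun ω => (g t ω - gradient 𝓛 (θ t ω)) i | ℱ t] := by
      intro i
      apply ae_eq_condExp_of_forall_setIntegral_eq (hm t) (hhi_int i)
      · intro s _ _
        exact (integrable_zero _ _ _).integrableOn
      · intro s hs _
        have hc : ∫ ω in s, (g t ω - gradient 𝓛 (θ t ω)) i ∂μ
            = (EuclideanSpace.proj (𝕜 := ℝ) i)
              (∫ ω in s, (g t ω - gradient 𝓛 (θ t ω)) ∂μ) := by
          exact ContinuousLinearMap.integral_comp_comm (EuclideanSpace.proj (𝕜 := ℝ) i) hh_int.integrableOn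
        rw [integral_zero, hc, hset s hs, map_zero]
      · exact stronglyMeasurable_const.aestronglyMeasurable
    have hzero_i : ∀ i : Fin d, ∫ ω, f ω i * (g t ω - gradient 𝓛 (θ t ω)) i ∂μ = 0 := by
      intro i
      have hFm : StronglyMeasurable[ℱ t] (fun ω => f ω i) :=
        (EuclideanSpace.proj i).continuous.comp_stronglyMeasurable hfm
      have hmul := condExp_mul_of_stronglyMeasurable_left (μ := μ) hFm (hprod_int i) (hhi_int i)
      have h0 : (fun ω => f ω i)
          * μ[(fun ω => (g t ω - gradient 𝓛 (θ t ω)) i) | ℱ t] =ᵐ[μ] (fun _ => (0:ℝ)) := by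
        filter_upwards [(hcondzero i).symm] with ω hω
        simp only [Pi.mul_apply, hω, mul_zero]
      have hic : ∫ ω, (μ[(fun ω => f ω i)
            * (fun ω => (g t ω - gradient 𝓛 (θ t ω)) i) | ℱ t]) ω ∂μ
          = ∫ ω, ((fun ω => f ω i) * (fun ω => (g t ω - gradient 𝓛 (θ t ω)) i)) ω ∂μ :=
        integral_condExp (hm t)
      calc ∫ ω, f ω i * (g t ω - gradient 𝓛 (θ t ω)) i ∂μ
          = ∫ ω, (μ[(fun ω => f ω i)
              * (fun ω => (g t ω - gradient 𝓛 (θ t ω)) i) | ℱ t]) ω ∂μ := hic.symm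
        _ = ∫ ω, (fun _ => (0:ℝ)) ω ∂μ := integral_congr_ae (hmul.trans h0)
        _ = 0 := by simp
    have hsum : ∀ ω, ⟪f ω, g t ω - gradient 𝓛 (θ t ω)⟫
        = ∑ i, f ω i * (g t ω - gradient 𝓛 (θ t ω)) i := by
      intro ω
      simp [PiLp.inner_apply, RCLike.inner_apply, starRingEnd_apply]
      exact Finset.sum_congr rfl (fun i _ => mul_comm _ _)
    calc ∫ ω, ⟪f ω, g t ω - gradient 𝓛 (θ t ω)⟫ ∂μ
        = ∫ ω, ∑ i, f ω i * (g t ω - gradient 𝓛 (θ t ω)) i ∂μ := by simp_rw [hsum]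
      _ = ∑ i, ∫ ω, f ω i * (g t ω - gradient 𝓛 (θ t ω)) i ∂μ :=
          integral_finset_sum _ (fun i _ => hprod_int i)
      _ = 0 := Finset.sum_eq_zero (fun i _ => hzero_i i)
  -- key integral identities
  have hA_int : Integrable (fun ω => ‖gradient 𝓛 (θ t ω)‖ ^ 2) μ := hq2.norm.integrable_sq
  have hip_qh : Integrable (fun ω => ⟪gradient 𝓛 (θ t ω), g t ω - gradient 𝓛 (θ t ω)⟫) μ :=
    hip_int _ _ hq2 hh2'
  have hz1 : ∫ ω, ⟪gradient 𝓛 (θ t ω), g t ω - gradient 𝓛 (θ t ω)⟫ ∂μ = 0 :=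
    hzero _ hqmeas hq2
  have hz2 : ∫ ω, ⟪(IG t ω) (gradient 𝓛 (θ t ω)), g t ω - gradient 𝓛 (θ t ω)⟫ ∂μ = 0 :=
    hzero _ hIGq_meas hIGq2
  have hS1 : ∫ ω, ⟪gradient 𝓛 (θ t ω), g t ω⟫ ∂μ = ∫ ω, ‖gradient 𝓛 (θ t ω)‖ ^ 2 ∂μ := by
    have hsplit : ∀ ω, ⟪gradient 𝓛 (θ t ω), g t ω⟫
        = ‖gradient 𝓛 (θ t ω)‖ ^ 2 + ⟪gradient 𝓛 (θ t ω), g t ω - gradient 𝓛 (θ t ω)⟫ := by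
      intro ω
      rw [inner_sub_right, real_inner_self_eq_norm_sq]
      ring
    simp_rw [hsplit]
    rw [integral_add hA_int hip_qh, hz1, add_zero]
  have hS2 : 0 ≤ ∫ ω, ⟪gradient 𝓛 (θ t ω), (IG t ω) (g t ω)⟫ ∂μ := by
    have hip_qIGq : Integrable
        (fun ω => ⟪gradient 𝓛 (θ t ω), (IG t ω) (gradient 𝓛 (θ t ω))⟫) μ :=
      hip_int _ _ hq2 hIGq2
    have hip_IGqh : Integrable
        (fun ω => ⟪(IG t ω) (gradient 𝓛 (θ t ω)), g t ω - gradient 𝓛 (θ t ω)⟫) μ :=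
      hip_int _ _ hIGq2 hh2'
    have heq : ∀ ω, ⟪gradient 𝓛 (θ t ω), (IG t ω) (g t ω)⟫
        = ⟪gradient 𝓛 (θ t ω), (IG t ω) (gradient 𝓛 (θ t ω))⟫
          + ⟪(IG t ω) (gradient 𝓛 (θ t ω)), g t ω - gradient 𝓛 (θ t ω)⟫ := by
      intro ω
      rw [← hIG_symm t ω]
      nth_rewrite 1 [show g t ω = gradient 𝓛 (θ t ω) + (g t ω - gradient 𝓛 (θ t ω)) by abel]
      rw [inner_add_right, hIG_symm t ω (gradient 𝓛 (θ t ω)) (gradient 𝓛 (θ t ω))]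
    simp_rw [heq]
    rw [integral_add hip_qIGq hip_IGqh, hz2, add_zero]
    apply integral_nonneg
    intro ω
    simp only [Pi.zero_apply]
    rw [real_inner_comm]
    exact hIG_psd t ω _
  have hS3 : ∫ ω, ‖g t ω‖ ^ 2 ∂μ
      ≤ (∫ ω, ‖gradient 𝓛 (θ t ω)‖ ^ 2 ∂μ) + σ ^ 2 := by
    have hsplit : ∀ ω, ‖g t ω‖ ^ 2 = ‖gradient 𝓛 (θ t ω)‖ ^ 2
        + 2 * ⟪gradient 𝓛 (θ t ω), g t ω - gradient 𝓛 (θ t ω)⟫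
        + ‖g t ω - gradient 𝓛 (θ t ω)‖ ^ 2 := by
      intro ω
      nth_rewrite 1 [show g t ω = gradient 𝓛 (θ t ω) + (g t ω - gradient 𝓛 (θ t ω)) by abel]
      rw [norm_add_sq_real]
    have hI2 : Integrable
        (fun ω => 2 * ⟪gradient 𝓛 (θ t ω), g t ω - gradient 𝓛 (θ t ω)⟫) μ :=
      hip_qh.const_mul 2
    have hI12 : Integrable (fun ω => ‖gradient 𝓛 (θ t ω)‖ ^ 2
        + 2 * ⟪gradient 𝓛 (θ t ω), g t ω - gradient 𝓛 (θ t ω)⟫) μ := hA_int.add hI2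
    have hvar' : ∫ ω, ‖g t ω - gradient 𝓛 (θ t ω)‖ ^ 2 ∂μ ≤ σ ^ 2 := by
      have hic : ∫ ω, (μ[fun ω => ‖g t ω - gradient 𝓛 (θ t ω)‖ ^ 2 | ℱ t]) ω ∂μ
          = ∫ ω, ‖g t ω - gradient 𝓛 (θ t ω)‖ ^ 2 ∂μ := integral_condExp (hm t)
      rw [← hic]
      calc ∫ ω, (μ[fun ω => ‖g t ω - gradient 𝓛 (θ t ω)‖ ^ 2 | ℱ t]) ω ∂μ
          ≤ ∫ _, σ ^ 2 ∂μ := integral_mono_ae integrable_condExp (integrable_const _) (hvar t)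
        _ = σ ^ 2 := by simp
    have hmul2 : ∫ ω, 2 * ⟪gradient 𝓛 (θ t ω), g t ω - gradient 𝓛 (θ t ω)⟫ ∂μ
        = 2 * ∫ ω, ⟪gradient 𝓛 (θ t ω), g t ω - gradient 𝓛 (θ t ω)⟫ ∂μ :=
      integral_const_mul 2 _
    simp_rw [hsplit]
    rw [integral_add hI12 (hvar_int t), integral_add hA_int hI2, hmul2, hz1, mul_zero, add_zero]
    linarith
  -- pointwise descent inequality
  have hpt : ∀ ω, 𝓛 (θ (t + 1) ω) ≤ 𝓛 (θ t ω) - η * ⟪gradient 𝓛 (θ t ω), g t ω⟫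
      - (η * lam) * ⟪gradient 𝓛 (θ t ω), (IG t ω) (g t ω)⟫
      + (L * η ^ 2 / 2) * (1 + lam * G) ^ 2 * ‖g t ω‖ ^ 2 := by
    intro ω
    have hd := fire_descent_lemma hdiff hsmooth (θ t ω) (θ (t + 1) ω)
    have hdiffeq : θ (t + 1) ω - θ t ω = -(η • (g t ω + lam • (IG t ω) (g t ω))) := by
      rw [hupdate t ω]; abel
    rw [hdiffeq] at hd
    have hinner : ⟪gradient 𝓛 (θ t ω), -(η • (g t ω + lam • (IG t ω) (g t ω)))⟫
        = -(η * ⟪gradient 𝓛 (θ t ω), g t ω⟫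
          + (η * lam) * ⟪gradient 𝓛 (θ t ω), (IG t ω) (g t ω)⟫) := by
      rw [inner_neg_right, real_inner_smul_right, inner_add_right, real_inner_smul_right]
      ring
    have hnorm1 : ‖g t ω + lam • (IG t ω) (g t ω)‖ ≤ (1 + lam * G) * ‖g t ω‖ := by
      have hop := (IG t ω).le_opNorm (g t ω)
      have hno := hIG_norm t ω
      calc ‖g t ω + lam • (IG t ω) (g t ω)‖
          ≤ ‖g t ω‖ + ‖lam • (IG t ω) (g t ω)‖ := norm_add_le _ _
        _ ≤ ‖g t ω‖ + lam * (G * ‖g t ω‖) := by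
            rw [norm_smul, Real.norm_eq_abs, abs_of_nonneg hlam]
            have hbig : ‖(IG t ω) (g t ω)‖ ≤ G * ‖g t ω‖ := by
              nlinarith [norm_nonneg (g t ω)]
            nlinarith
        _ = (1 + lam * G) * ‖g t ω‖ := by ring
    have hnorm : ‖-(η • (g t ω + lam • (IG t ω) (g t ω)))‖ ^ 2
        ≤ η ^ 2 * ((1 + lam * G) ^ 2 * ‖g t ω‖ ^ 2) := by
      rw [norm_neg, norm_smul, Real.norm_eq_abs, abs_of_pos hη, mul_pow]
      have h1 : ‖g t ω + lam • (IG t ω) (g t ω)‖ ^ 2 ≤ ((1 + lam * G) * ‖g t ω‖) ^ 2 := by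
        apply sq_le_sq'
        · nlinarith [norm_nonneg (g t ω + lam • (IG t ω) (g t ω)), norm_nonneg (g t ω),
            mul_nonneg (mul_nonneg hlam hG) (norm_nonneg (g t ω))]
        · exact hnorm1
      calc η ^ 2 * ‖g t ω + lam • (IG t ω) (g t ω)‖ ^ 2
          ≤ η ^ 2 * ((1 + lam * G) * ‖g t ω‖) ^ 2 := by nlinarith [sq_nonneg η]
        _ = η ^ 2 * ((1 + lam * G) ^ 2 * ‖g t ω‖ ^ 2) := by ring
    rw [hinner] at hd
    have h3 := mul_le_mul_of_nonneg_left hnorm (by linarith : (0:ℝ) ≤ L / 2)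
    have h4 : L / 2 * (η ^ 2 * ((1 + lam * G) ^ 2 * ‖g t ω‖ ^ 2))
        = (L * η ^ 2 / 2) * (1 + lam * G) ^ 2 * ‖g t ω‖ ^ 2 := by ring
    linarith
  -- integrate
  have hip1_int : Integrable (fun ω => ⟪gradient 𝓛 (θ t ω), g t ω⟫) μ :=
    hip_int _ _ hq2 hgt2
  have hip2_int : Integrable (fun ω => ⟪gradient 𝓛 (θ t ω), (IG t ω) (g t ω)⟫) μ :=
    hip_int _ _ hq2 hIGg2
  have hgsq_int : Integrable (fun ω => ‖g t ω‖ ^ 2) μ := hgt2.norm.integrable_sq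
  have hm1 : Integrable (fun ω => η * ⟪gradient 𝓛 (θ t ω), g t ω⟫) μ :=
    hip1_int.const_mul η
  have hm2 : Integrable (fun ω => (η * lam) * ⟪gradient 𝓛 (θ t ω), (IG t ω) (g t ω)⟫) μ :=
    hip2_int.const_mul (η * lam)
  have hm3 : Integrable (fun ω => (L * η ^ 2 / 2) * (1 + lam * G) ^ 2 * ‖g t ω‖ ^ 2) μ :=
    hgsq_int.const_mul _
  have hint1 : Integrable (fun ω => 𝓛 (θ t ω) - η * ⟪gradient 𝓛 (θ t ω), g t ω⟫) μ :=
    (h𝓛int t).sub hm1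
  have hint2 : Integrable (fun ω => 𝓛 (θ t ω) - η * ⟪gradient 𝓛 (θ t ω), g t ω⟫
      - (η * lam) * ⟪gradient 𝓛 (θ t ω), (IG t ω) (g t ω)⟫) μ := hint1.sub hm2
  have hrhs_int : Integrable (fun ω => 𝓛 (θ t ω) - η * ⟪gradient 𝓛 (θ t ω), g t ω⟫
      - (η * lam) * ⟪gradient 𝓛 (θ t ω), (IG t ω) (g t ω)⟫
      + (L * η ^ 2 / 2) * (1 + lam * G) ^ 2 * ‖g t ω‖ ^ 2) μ := hint2.add hm3
  have hmono := integral_mono (h𝓛int (t + 1)) hrhs_int hpt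
  have hrhs_eq : ∫ ω, (𝓛 (θ t ω) - η * ⟪gradient 𝓛 (θ t ω), g t ω⟫
      - (η * lam) * ⟪gradient 𝓛 (θ t ω), (IG t ω) (g t ω)⟫
      + (L * η ^ 2 / 2) * (1 + lam * G) ^ 2 * ‖g t ω‖ ^ 2) ∂μ
      = (∫ ω, 𝓛 (θ t ω) ∂μ) - η * ∫ ω, ⟪gradient 𝓛 (θ t ω), g t ω⟫ ∂μ
        - (η * lam) * ∫ ω, ⟪gradient 𝓛 (θ t ω), (IG t ω) (g t ω)⟫ ∂μ
        + (L * η ^ 2 / 2) * (1 + lam * G) ^ 2 * ∫ ω, ‖g t ω‖ ^ 2 ∂μ := by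
    rw [integral_add hint2 hm3, integral_sub hint1 hm2, integral_sub (h𝓛int t) hm1,
      integral_const_mul, integral_const_mul, integral_const_mul]
  rw [hrhs_eq, hS1] at hmono
  have hC : (0:ℝ) ≤ (L * η ^ 2 / 2) * (1 + lam * G) ^ 2 := by positivity
  have h5 := mul_le_mul_of_nonneg_left hS3 hC
  have h6 : 0 ≤ (η * lam) * ∫ ω, ⟪gradient 𝓛 (θ t ω), (IG t ω) (g t ω)⟫ ∂μ :=
    mul_nonneg (mul_nonneg hη.le hlam) hS2
  have h7 : η * (1 - L * η / 2 * (1 + lam * G) ^ 2) * (∫ ω, ‖gradient 𝓛 (θ t ω)‖ ^ 2 ∂μ)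
      = η * (∫ ω, ‖gradient 𝓛 (θ t ω)‖ ^ 2 ∂μ)
        - (L * η ^ 2 / 2) * (1 + lam * G) ^ 2 * (∫ ω, ‖gradient 𝓛 (θ t ω)‖ ^ 2 ∂μ) := by
    ring
  linarith
end

section
/- Let 𝓛 : ℝ^d → ℝ be L-smooth and bounded below by 𝓛⋆. On a probability space with filtration (𝓕_t), let θ^(0) be deterministic and define θ^(t+1) = θ^(t) − η (I + λ I_G^(t)) g_t, where λ ≥ 0, g_t is 𝓕_{t+1}-measurable with E[g_t | 𝓕_t] = ∇𝓛(θ^(t)) and E[‖g_t − ∇𝓛(θ^(t))‖² | 𝓕_t] ≤ σ², and I_G^(t) is an 𝓕_t-measurable symmetric positive semidefinite d×d matrix with ‖I_G^(t)‖_op ≤ G. For T ≥ (1+λG)², with step size η = 1/((1+λG)·L·√T) (which satisfies η ≤ 1/(L(1+λG)²)), one has min_{0 ≤ t < T} E[‖∇𝓛(θ^(t))‖²] ≤ ( 2(1+λG)·L·(𝓛(θ^(0)) − 𝓛⋆) + (1+λG)·σ² ) / √T; in particular min_{0 ≤ t < T} E[‖∇𝓛(θ^(t))‖²] = O(1/√T).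 -/
open MeasureTheory
open scoped RealInnerProductSpace

variable {d : ℕ}

lemma line_hasDerivAt (𝓛 : EuclideanSpace ℝ (Fin d) → ℝ) (hdiff : Differentiable ℝ 𝓛) (a h : EuclideanSpace ℝ (Fin d)) (s : ℝ) :
    HasDerivAt (fun s : ℝ => 𝓛 (a + s • h)) ⟪gradient 𝓛 (a + s • h), h⟫ s := by
  have hc : HasDerivAt (fun s : ℝ => a + s • h) h s := by
    simpa using ((hasDerivAt_id s).smul_const h).const_add a
  have hg := (hdiff (a + s • h)).hasGradientAt.hasFDerivAt
  have := hg.comp_hasDerivAt s hc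
  simpa [InnerProductSpace.toDual_apply_apply, Function.comp_def] using this

lemma taylor_bound (𝓛 : EuclideanSpace ℝ (Fin d) → ℝ) {L : ℝ} (hL : 0 ≤ L) (hdiff : Differentiable ℝ 𝓛)
    (hsmooth : ∀ a b : EuclideanSpace ℝ (Fin d), ‖gradient 𝓛 a - gradient 𝓛 b‖ ≤ L * ‖a - b‖) (a b : EuclideanSpace ℝ (Fin d)) :
    |𝓛 b - 𝓛 a - ⟪gradient 𝓛 a, b - a⟫| ≤ L / 2 * ‖b - a‖ ^ 2 := by
  set h := b - a with hh
  have key : ∀ ε : ℝ, ε = 1 ∨ ε = -1 →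
      ε * (𝓛 b - 𝓛 a - ⟪gradient 𝓛 a, h⟫) ≤ L / 2 * ‖h‖ ^ 2 := by
    intro ε hε
    set φ : ℝ → ℝ := fun s => ε * (𝓛 (a + s • h) - s * ⟪gradient 𝓛 a, h⟫) - L / 2 * s ^ 2 * ‖h‖ ^ 2 with hφ
    have hder : ∀ s : ℝ, HasDerivAt φ
        (ε * (⟪gradient 𝓛 (a + s • h), h⟫ - ⟪gradient 𝓛 a, h⟫) - L * s * ‖h‖ ^ 2) s := by
      intro s
      have h1 := line_hasDerivAt (d := d) 𝓛 hdiff a h s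
      have h2 : HasDerivAt (fun s : ℝ => 𝓛 (a + s • h) - s * ⟪gradient 𝓛 a, h⟫)
          (⟪gradient 𝓛 (a + s • h), h⟫ - ⟪gradient 𝓛 a, h⟫) s :=
        by simpa using h1.fun_sub ((hasDerivAt_id s).mul_const ⟪gradient 𝓛 a, h⟫)
      have h3 : HasDerivAt (fun s : ℝ => L / 2 * s ^ 2 * ‖h‖ ^ 2) (L * s * ‖h‖ ^ 2) s := by
        have : HasDerivAt (fun s : ℝ => s ^ 2) (2 * s) s := by
          simpa using (hasDerivAt_pow 2 s)
        have := (this.const_mul (L / 2)).mul_const (‖h‖ ^ 2)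
        exact this.congr_deriv (by ring)
      simpa [hφ, mul_comm] using (h2.const_mul ε).fun_sub h3
    have hanti : AntitoneOn φ (Set.Icc 0 1) := by
      apply antitoneOn_of_deriv_nonpos (convex_Icc 0 1)
      · exact fun s _ => (hder s).continuousAt.continuousWithinAt
      · exact fun s _ => ((hder s).differentiableAt).differentiableWithinAt
      · intro s hs
        rw [(hder s).deriv]
        rw [interior_Icc] at hs
        have hbound : |⟪gradient 𝓛 (a + s • h) - gradient 𝓛 a, h⟫| ≤ L * s * ‖h‖ ^ 2 := by
          calc |⟪gradient 𝓛 (a + s • h) - gradient 𝓛 a, h⟫|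
              ≤ ‖gradient 𝓛 (a + s • h) - gradient 𝓛 a‖ * ‖h‖ := abs_real_inner_le_norm _ _
            _ ≤ (L * ‖(a + s • h) - a‖) * ‖h‖ := by
                have := hsmooth (a + s • h) a
                exact mul_le_mul_of_nonneg_right this (norm_nonneg _)
            _ = L * s * ‖h‖ ^ 2 := by
                rw [add_sub_cancel_left, norm_smul]
                simp [abs_of_pos hs.1]
                ring
        have hεle : ε * (⟪gradient 𝓛 (a + s • h), h⟫ - ⟪gradient 𝓛 a, h⟫) ≤ L * s * ‖h‖ ^ 2 := by
          rw [← inner_sub_left]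
          rcases hε with rfl | rfl
          · simpa using (le_abs_self _).trans hbound
          · simpa using (neg_le_abs _).trans hbound
        linarith
    have h01 := hanti (Set.left_mem_Icc.2 zero_le_one) (Set.right_mem_Icc.2 zero_le_one) zero_le_one
    have hb : a + (1 : ℝ) • h = b := by simp [hh]
    simp only [hφ, hb, zero_smul, add_zero, zero_pow, one_pow, zero_mul, mul_zero, sub_zero,
      one_mul] at h01
    linarith
  have k1 := key 1 (Or.inl rfl)
  have k2 := key (-1) (Or.inr rfl)
  rw [abs_le]
  constructor <;> nlinarith
open MeasureTheory
open scoped RealInnerProductSpace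

section Condexp
variable {Ω : Type*} {m m0 : MeasurableSpace Ω} {μ : Measure Ω}

lemma condexp_clm_comm [IsFiniteMeasure μ] (hm : m ≤ m0)
    {E F : Type*} [NormedAddCommGroup E] [NormedSpace ℝ E] [CompleteSpace E]
    [NormedAddCommGroup F] [NormedSpace ℝ F] [CompleteSpace F]
    (Lm : E →L[ℝ] F) {f : Ω → E} (hf : Integrable f μ) :
    (fun ω => Lm ((μ[f|m]) ω)) =ᵐ[μ] μ[(fun ω => Lm (f ω))|m] := by
  refine ae_eq_condExp_of_forall_setIntegral_eq hm (Lm.integrable_comp hf) ?_ ?_ ?_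
  · exact fun s _ _ => (Lm.integrable_comp integrable_condExp).integrableOn
  · intro s hs hμs
    rw [ContinuousLinearMap.integral_comp_comm Lm integrable_condExp.integrableOn,
        setIntegral_condExp hm hf hs, ContinuousLinearMap.integral_comp_comm Lm hf.integrableOn]
  · exact (Lm.continuous.comp_stronglyMeasurable stronglyMeasurable_condExp).aestronglyMeasurable

variable {d : ℕ}

lemma memLp2_mul_integrable {u f : Ω → ℝ} (hu : MemLp u 2 μ) (hf : MemLp f 2 μ) :
    Integrable (fun ω => u ω * f ω) μ := by
  have : MemLp (u • f) 1 μ := hf.smul hu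
  exact memLp_one_iff_integrable.mp this

lemma integral_inner_condexp [IsProbabilityMeasure μ] (hm : m ≤ m0)
    {u f v : Ω → EuclideanSpace ℝ (Fin d)}
    (hu : StronglyMeasurable[m] u) (hu2 : MemLp u 2 μ)
    (hf : Integrable f μ) (hf2 : MemLp f 2 μ)
    (hcond : μ[f|m] =ᵐ[μ] v) (hv2 : MemLp v 2 μ) :
    ∫ ω, ⟪u ω, f ω⟫ ∂μ = ∫ ω, ⟪u ω, v ω⟫ ∂μ := by
  have hui : ∀ i : Fin d, MemLp (fun ω => u ω i) 2 μ := fun i => by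
    simpa [Function.comp_def] using (EuclideanSpace.proj (𝕜 := ℝ) i).comp_memLp' hu2
  have hfi : ∀ i : Fin d, MemLp (fun ω => f ω i) 2 μ := fun i => by
    simpa [Function.comp_def] using (EuclideanSpace.proj (𝕜 := ℝ) i).comp_memLp' hf2
  have hvi : ∀ i : Fin d, MemLp (fun ω => v ω i) 2 μ := fun i => by
    simpa [Function.comp_def] using (EuclideanSpace.proj (𝕜 := ℝ) i).comp_memLp' hv2
  have huim : ∀ i : Fin d, StronglyMeasurable[m] (fun ω => u ω i) := fun i => by
    have := (EuclideanSpace.proj (𝕜 := ℝ) i).continuous.comp_stronglyMeasurable hu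
    simpa [Function.comp] using this
  have key : ∀ i : Fin d, ∫ ω, u ω i * f ω i ∂μ = ∫ ω, u ω i * v ω i ∂μ := by
    intro i
    have hprod : Integrable (fun ω => u ω i * f ω i) μ :=
      memLp2_mul_integrable (hui i) (hfi i)
    have hcondi : μ[(fun ω => f ω i)|m] =ᵐ[μ] fun ω => v ω i := by
      have h1 := (condexp_clm_comm hm (EuclideanSpace.proj (𝕜 := ℝ) i) hf).symm
      have h2 : (fun ω => EuclideanSpace.proj (𝕜 := ℝ) i ((μ[f|m]) ω)) =ᵐ[μ]
          fun ω => v ω i := hcond.mono fun ω hω => by simp [hω]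
      exact (h1.trans h2 : _)
    have hpull := condExp_mul_of_stronglyMeasurable_left (huim i) hprod ((hfi i).integrable (by norm_num))
    calc ∫ ω, u ω i * f ω i ∂μ
        = ∫ ω, (μ[(fun ω => u ω i * f ω i)|m]) ω ∂μ := (integral_condExp hm).symm
      _ = ∫ ω, u ω i * v ω i ∂μ := by
          refine integral_congr_ae (hpull.trans ?_)
          filter_upwards [hcondi] with ω hω
          simp [hω]
  calc ∫ ω, ⟪u ω, f ω⟫ ∂μ = ∫ ω, ∑ i, u ω i * f ω i ∂μ := by
        refine integral_congr_ae (Filter.Eventually.of_forall fun ω => ?_)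
        simp [PiLp.inner_apply, RCLike.inner_apply, mul_comm]
    _ = ∑ i, ∫ ω, u ω i * f ω i ∂μ :=
        integral_finset_sum _ fun i _ => memLp2_mul_integrable (hui i) (hfi i)
    _ = ∑ i, ∫ ω, u ω i * v ω i ∂μ := by simp_rw [key]
    _ = ∫ ω, ∑ i, u ω i * v ω i ∂μ :=
        (integral_finset_sum _ fun i _ => memLp2_mul_integrable (hui i) (hvi i)).symm
    _ = ∫ ω, ⟪u ω, v ω⟫ ∂μ := by
        refine integral_congr_ae (Filter.Eventually.of_forall fun ω => ?_)
        simp [PiLp.inner_apply, RCLike.inner_apply, mul_comm]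
end Condexp

set_option maxHeartbeats 2000000 in
/-- `O(1/√T)` rate for FIRE preconditioned SGD.
Under the same assumptions, for `T ≥ (1+λG)²` and step size `η = 1/((1+λG)·L·√T)`,
`min_{0 ≤ t < T} E[‖∇𝓛(θ^(t))‖²]
  ≤ (2(1+λG)L(𝓛(θ^(0)) − 𝓛⋆) + (1+λG)σ²)/√T`. -/
theorem fire_min_gradient_rate
    {d : ℕ} {Ω : Type*} {m0 : MeasurableSpace Ω}
    (μ : Measure Ω) [IsProbabilityMeasure μ] (ℱ : Filtration ℕ m0)
    (𝓛 : EuclideanSpace ℝ (Fin d) → ℝ) (L Lstar : ℝ) (hL : 0 < L)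
    (hdiff : Differentiable ℝ 𝓛)
    (hsmooth : ∀ a b, ‖gradient 𝓛 a - gradient 𝓛 b‖ ≤ L * ‖a - b‖)
    (hbdd : ∀ p, Lstar ≤ 𝓛 p)
    (lam G σ : ℝ) (hlam : 0 ≤ lam) (hG : 0 ≤ G)
    (T : ℕ) (hT : ((1 + lam * G) ^ 2 : ℝ) ≤ (T : ℝ))
    (η : ℝ) (hη_def : η = 1 / ((1 + lam * G) * L * Real.sqrt T))
    (θ g : ℕ → Ω → EuclideanSpace ℝ (Fin d))
    (IG : ℕ → Ω → (EuclideanSpace ℝ (Fin d) →L[ℝ] EuclideanSpace ℝ (Fin d)))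
    (θ0 : EuclideanSpace ℝ (Fin d)) (hθ0 : θ 0 = fun _ => θ0)
    (hupdate : ∀ t ω, θ (t + 1) ω = θ t ω - η • (g t ω + lam • (IG t ω) (g t ω)))
    (hg_meas : ∀ t, StronglyMeasurable[ℱ (t + 1)] (g t))
    (hg_int : ∀ t, Integrable (g t) μ)
    (hmean : ∀ t, μ[g t | ℱ t] =ᵐ[μ] fun ω => gradient 𝓛 (θ t ω))
    (hvar_int : ∀ t, Integrable (fun ω => ‖g t ω - gradient 𝓛 (θ t ω)‖ ^ 2) μ)
    (hvar : ∀ t, μ[fun ω => ‖g t ω - gradient 𝓛 (θ t ω)‖ ^ 2 | ℱ t]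
      ≤ᵐ[μ] fun _ => σ ^ 2)
    (hIG_meas : ∀ t, StronglyMeasurable[ℱ t] (IG t))
    (hIG_symm : ∀ t ω v w, ⟪(IG t ω) v, w⟫ = ⟪v, (IG t ω) w⟫)
    (hIG_psd : ∀ t ω v, 0 ≤ ⟪(IG t ω) v, v⟫)
    (hIG_norm : ∀ t ω, ‖IG t ω‖ ≤ G) :
    (Finset.range T).inf'
        (Finset.nonempty_range_iff.mpr (by
          rintro rfl
          norm_num at hT
          nlinarith [mul_nonneg hlam hG]))
        (fun t => ∫ ω, ‖gradient 𝓛 (θ t ω)‖ ^ 2 ∂μ)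
      ≤ (2 * (1 + lam * G) * L * (𝓛 θ0 - Lstar) + (1 + lam * G) * σ ^ 2)
        / Real.sqrt T := by
  classical
  set K : ℝ := 1 + lam * G with hKdef
  have hK1 : (1 : ℝ) ≤ K := by nlinarith [mul_nonneg hlam hG]
  have hK0 : (0 : ℝ) < K := by linarith
  have hT1 : (1 : ℝ) ≤ (T : ℝ) := le_trans (by nlinarith) hT
  have hTpos : (0 : ℝ) < (T : ℝ) := by linarith
  set s : ℝ := Real.sqrt T with hsdef
  have hs2 : s * s = (T : ℝ) := Real.mul_self_sqrt hTpos.le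
  have hsK : K ≤ s := by
    have := Real.sqrt_le_sqrt hT
    rwa [Real.sqrt_sq hK0.le] at this
  have hspos : (0 : ℝ) < s := lt_of_lt_of_le (by linarith) hsK
  have hηpos : 0 < η := by
    rw [hη_def]
    positivity
  have hη1 : η * L * K ^ 2 = K / s := by
    rw [hη_def]
    field_simp
  have hηK : η * L * K ^ 2 ≤ 1 := by
    rw [hη1, div_le_one hspos]; exact hsK
  -- gradient is Lipschitz hence continuous
  have hgradcont : Continuous (gradient 𝓛) := by
    have : LipschitzWith (Real.toNNReal L) (gradient 𝓛) := by
      apply LipschitzWith.of_dist_le_mul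
      intro x y
      rw [dist_eq_norm, dist_eq_norm]
      calc ‖gradient 𝓛 x - gradient 𝓛 y‖ ≤ L * ‖x - y‖ := hsmooth x y
        _ ≤ Real.toNNReal L * ‖x - y‖ := by
            gcongr
            exact Real.le_coe_toNNReal L
    exact this.continuous
  -- measurability of θ
  have happly : ∀ (t : ℕ) (m : MeasurableSpace Ω) (v : Ω → EuclideanSpace ℝ (Fin d)),
      StronglyMeasurable[m] (IG t) → StronglyMeasurable[m] v →
      StronglyMeasurable[m] (fun ω => IG t ω (v ω)) := by
    intro t m v hA hv
    exact isBoundedBilinearMap_apply.continuous.comp_stronglyMeasurable (hA.prodMk hv)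
  have hθmeas : ∀ t, StronglyMeasurable[ℱ t] (θ t) := by
    intro t
    induction t with
    | zero => rw [hθ0]; exact stronglyMeasurable_const
    | succ t ih =>
      have hupd : θ (t + 1) = fun ω => θ t ω - η • (g t ω + lam • (IG t ω) (g t ω)) := by
        funext ω; exact hupdate t ω
      rw [hupd]
      have hIGg : StronglyMeasurable[ℱ (t+1)] (fun ω => IG t ω (g t ω)) :=
        happly t _ _ ((hIG_meas t).mono (ℱ.mono (Nat.le_succ t))) (hg_meas t)
      exact (ih.mono (ℱ.mono (Nat.le_succ t))).sub
        (((hg_meas t).add (hIGg.const_smul lam)).const_smul η)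
  have hgrmeas : ∀ t, StronglyMeasurable[ℱ t] (fun ω => gradient 𝓛 (θ t ω)) := fun t =>
    hgradcont.comp_stronglyMeasurable (hθmeas t)
  -- L² membership
  have hgr2_of : ∀ t, MemLp (θ t) 2 μ → MemLp (fun ω => gradient 𝓛 (θ t ω)) 2 μ := by
    intro t hθ2
    refine MemLp.of_le ((memLp_const ‖gradient 𝓛 0‖).add ((hθ2.norm).const_mul L)) ?_ ?_
    · exact ((hgrmeas t).mono (ℱ.le t)).aestronglyMeasurable
    · refine Filter.Eventually.of_forall fun ω => ?_
      have h1 : ‖gradient 𝓛 (θ t ω) - gradient 𝓛 0‖ ≤ L * ‖θ t ω - 0‖ := hsmooth _ _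
      have h2 : ‖gradient 𝓛 (θ t ω)‖ ≤ ‖gradient 𝓛 0‖ + L * ‖θ t ω‖ := by
        have := norm_sub_norm_le (gradient 𝓛 (θ t ω)) (gradient 𝓛 0)
        rw [sub_zero] at h1
        linarith
      exact h2.trans (le_abs_self _)
  have he2 : ∀ t, MemLp (fun ω => g t ω - gradient 𝓛 (θ t ω)) 2 μ := by
    intro t
    have haesm : AEStronglyMeasurable (fun ω => g t ω - gradient 𝓛 (θ t ω)) μ :=
      (hg_int t).aestronglyMeasurable.sub ((hgrmeas t).mono (ℱ.le t)).aestronglyMeasurable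
    exact (memLp_two_iff_integrable_sq_norm haesm).mpr (hvar_int t)
  have hθ2 : ∀ t, MemLp (θ t) 2 μ := by
    intro t
    induction t with
    | zero => rw [hθ0]; exact memLp_const θ0
    | succ t ih =>
      have hgr2 := hgr2_of t ih
      have hg2 : MemLp (g t) 2 μ := by
        have : g t = fun ω => gradient 𝓛 (θ t ω) + (g t ω - gradient 𝓛 (θ t ω)) := by funext ω; abel
        rw [this]; exact hgr2.add (he2 t)
      have hIGg2 : MemLp (fun ω => IG t ω (g t ω)) 2 μ := by
        refine MemLp.of_le ((hg2.norm).const_mul G) ?_ ?_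
        · exact (((happly t _ _ ((hIG_meas t).mono (ℱ.mono (Nat.le_succ t)))
            (hg_meas t))).mono (ℱ.le (t+1))).aestronglyMeasurable
        · refine Filter.Eventually.of_forall fun ω => ?_
          have h1 : ‖IG t ω (g t ω)‖ ≤ ‖IG t ω‖ * ‖g t ω‖ :=
            (IG t ω).le_opNorm _
          have h2 : ‖IG t ω‖ * ‖g t ω‖ ≤ G * ‖g t ω‖ :=
            mul_le_mul_of_nonneg_right (hIG_norm t ω) (norm_nonneg _)
          exact (h1.trans h2).trans (le_abs_self _)
      have hupd : θ (t + 1) = fun ω => θ t ω - η • (g t ω + lam • (IG t ω) (g t ω)) := by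
        funext ω; exact hupdate t ω
      rw [hupd]
      exact ih.sub ((hg2.add (hIGg2.const_smul lam)).const_smul η)
  have hgr2 : ∀ t, MemLp (fun ω => gradient 𝓛 (θ t ω)) 2 μ := fun t => hgr2_of t (hθ2 t)
  have hg2 : ∀ t, MemLp (g t) 2 μ := by
    intro t
    have : g t = fun ω => gradient 𝓛 (θ t ω) + (g t ω - gradient 𝓛 (θ t ω)) := by funext ω; abel
    rw [this]; exact (hgr2 t).add (he2 t)
  have hgrnorm2int : ∀ t, Integrable (fun ω => ‖gradient 𝓛 (θ t ω)‖ ^ 2) μ := fun t =>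
    (memLp_two_iff_integrable_sq_norm
      ((hgrmeas t).mono (ℱ.le t)).aestronglyMeasurable).mp (hgr2 t)
  -- integrability of 𝓛 ∘ θ t
  have h𝓛int : ∀ t, Integrable (fun ω => 𝓛 (θ t ω)) μ := by
    intro t
    have hsub2 : MemLp (fun ω => θ t ω - θ0) 2 μ := (hθ2 t).sub (memLp_const θ0)
    have haesm : AEStronglyMeasurable (fun ω => θ t ω - θ0) μ := hsub2.aestronglyMeasurable
    have hn1 : Integrable (fun ω => ‖θ t ω - θ0‖) μ := hsub2.norm.integrable one_le_two
    have hn2 : Integrable (fun ω => ‖θ t ω - θ0‖ ^ 2) μ :=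
      (memLp_two_iff_integrable_sq_norm haesm).mp hsub2
    refine Integrable.mono'
      (g := fun ω => |𝓛 θ0| + ‖gradient 𝓛 θ0‖ * ‖θ t ω - θ0‖ + L / 2 * ‖θ t ω - θ0‖ ^ 2)
      (((integrable_const _).add (hn1.const_mul _)).add (hn2.const_mul _))
      ((hdiff.continuous.comp_stronglyMeasurable
        ((hθmeas t).mono (ℱ.le t))).aestronglyMeasurable) ?_
    refine Filter.Eventually.of_forall fun ω => ?_
    have htay := taylor_bound 𝓛 hL.le hdiff hsmooth θ0 (θ t ω)
    have hcs : |⟪gradient 𝓛 θ0, θ t ω - θ0⟫| ≤ ‖gradient 𝓛 θ0‖ * ‖θ t ω - θ0‖ :=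
      abs_real_inner_le_norm _ _
    rw [Real.norm_eq_abs]
    have h4 : |𝓛 (θ t ω)| ≤ |𝓛 (θ t ω) - 𝓛 θ0 - ⟪gradient 𝓛 θ0, θ t ω - θ0⟫| +
        |⟪gradient 𝓛 θ0, θ t ω - θ0⟫| + |𝓛 θ0| := by
      have := abs_add_three (𝓛 (θ t ω) - 𝓛 θ0 - ⟪gradient 𝓛 θ0, θ t ω - θ0⟫)
        (⟪gradient 𝓛 θ0, θ t ω - θ0⟫) (𝓛 θ0)
      simpa using this
    linarith

  -- preconditioned gradient u and preconditioned stochastic gradient Pg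
  have hIGgrmeas : ∀ t, StronglyMeasurable[ℱ t] (fun ω => IG t ω (gradient 𝓛 (θ t ω))) :=
    fun t => happly t _ _ (hIG_meas t) (hgrmeas t)
  have hu_meas : ∀ t, StronglyMeasurable[ℱ t]
      (fun ω => gradient 𝓛 (θ t ω) + lam • IG t ω (gradient 𝓛 (θ t ω))) :=
    fun t => (hgrmeas t).add ((hIGgrmeas t).const_smul lam)
  have hIGgr2 : ∀ t, MemLp (fun ω => IG t ω (gradient 𝓛 (θ t ω))) 2 μ := by
    intro t
    refine MemLp.of_le (((hgr2 t).norm).const_mul G)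
      (((hIGgrmeas t).mono (ℱ.le t)).aestronglyMeasurable) ?_
    refine Filter.Eventually.of_forall fun ω => ?_
    exact (((IG t ω).le_opNorm _).trans
      (mul_le_mul_of_nonneg_right (hIG_norm t ω) (norm_nonneg _))).trans (le_abs_self _)
  have hu2 : ∀ t, MemLp (fun ω => gradient 𝓛 (θ t ω) + lam • IG t ω (gradient 𝓛 (θ t ω))) 2 μ :=
    fun t => (hgr2 t).add ((hIGgr2 t).const_smul lam)
  have hIGg2 : ∀ t, MemLp (fun ω => IG t ω (g t ω)) 2 μ := by
    intro t
    refine MemLp.of_le (((hg2 t).norm).const_mul G)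
      (((happly t _ _ ((hIG_meas t).mono (ℱ.mono (Nat.le_succ t)))
        (hg_meas t)).mono (ℱ.le (t+1))).aestronglyMeasurable) ?_
    refine Filter.Eventually.of_forall fun ω => ?_
    exact (((IG t ω).le_opNorm _).trans
      (mul_le_mul_of_nonneg_right (hIG_norm t ω) (norm_nonneg _))).trans (le_abs_self _)
  have hinner_int : ∀ (p q : Ω → EuclideanSpace ℝ (Fin d)), MemLp p 2 μ → MemLp q 2 μ →
      Integrable (fun ω => ⟪p ω, q ω⟫) μ := by
    intro p q hp hq
    refine Integrable.mono' (memLp2_mul_integrable hp.norm hq.norm)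
      (hp.aestronglyMeasurable.inner hq.aestronglyMeasurable) ?_
    exact Filter.Eventually.of_forall fun ω => abs_real_inner_le_norm _ _
  set c : ℝ := L * η ^ 2 * K ^ 2 / 2 * σ ^ 2 with hcdef
  -- one-step expected descent
  have hstep : ∀ t, ∫ ω, 𝓛 (θ (t+1) ω) ∂μ ≤ ∫ ω, 𝓛 (θ t ω) ∂μ
      - η / 2 * ∫ ω, ‖gradient 𝓛 (θ t ω)‖ ^ 2 ∂μ + c := by
    intro t
    have hPg2 : MemLp (fun ω => g t ω + lam • IG t ω (g t ω)) 2 μ :=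
      (hg2 t).add ((hIGg2 t).const_smul lam)
    have hPgsqint : Integrable (fun ω => ‖g t ω + lam • IG t ω (g t ω)‖ ^ 2) μ :=
      (memLp_two_iff_integrable_sq_norm hPg2.aestronglyMeasurable).mp hPg2
    have hug_int : Integrable
        (fun ω => ⟪gradient 𝓛 (θ t ω) + lam • IG t ω (gradient 𝓛 (θ t ω)), g t ω⟫) μ :=
      hinner_int _ _ (hu2 t) (hg2 t)
    -- pathwise descent
    have hpath : ∀ ω, 𝓛 (θ (t+1) ω) ≤ 𝓛 (θ t ω)
        - η * ⟪gradient 𝓛 (θ t ω) + lam • IG t ω (gradient 𝓛 (θ t ω)), g t ω⟫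
        + L / 2 * (η ^ 2 * ‖g t ω + lam • IG t ω (g t ω)‖ ^ 2) := by
      intro ω
      have htay := (abs_le.mp (taylor_bound 𝓛 hL.le hdiff hsmooth (θ t ω) (θ (t+1) ω))).2
      have hdiffpt : θ (t+1) ω - θ t ω = -(η • (g t ω + lam • IG t ω (g t ω))) := by
        rw [hupdate t ω]; abel
      have hip : ⟪gradient 𝓛 (θ t ω), θ (t+1) ω - θ t ω⟫
          = -(η * ⟪gradient 𝓛 (θ t ω) + lam • IG t ω (gradient 𝓛 (θ t ω)), g t ω⟫) := by
        rw [hdiffpt, inner_neg_right, real_inner_smul_right]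
        have hsymm : ⟪gradient 𝓛 (θ t ω), IG t ω (g t ω)⟫
            = ⟪IG t ω (gradient 𝓛 (θ t ω)), g t ω⟫ := (hIG_symm t ω _ _).symm ▸ rfl
        simp only [inner_add_right, inner_add_left, real_inner_smul_right, real_inner_smul_left]
        rw [← hIG_symm t ω (gradient 𝓛 (θ t ω)) (g t ω)]
      have hnorm : ‖θ (t+1) ω - θ t ω‖ ^ 2 = η ^ 2 * ‖g t ω + lam • IG t ω (g t ω)‖ ^ 2 := by
        rw [hdiffpt, norm_neg, norm_smul, Real.norm_eq_abs, mul_pow, sq_abs]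
      rw [hip, hnorm] at htay
      linarith
    have hint_sub : Integrable (fun ω => 𝓛 (θ t ω)
        - η * ⟪gradient 𝓛 (θ t ω) + lam • IG t ω (gradient 𝓛 (θ t ω)), g t ω⟫) μ :=
      (h𝓛int t).sub (hug_int.const_mul η)
    have hint_q : Integrable
        (fun ω => L / 2 * (η ^ 2 * ‖g t ω + lam • IG t ω (g t ω)‖ ^ 2)) μ :=
      (hPgsqint.const_mul _).const_mul _
    have hInt1 : ∫ ω, 𝓛 (θ (t+1) ω) ∂μ ≤ ∫ ω, (𝓛 (θ t ω)
        - η * ⟪gradient 𝓛 (θ t ω) + lam • IG t ω (gradient 𝓛 (θ t ω)), g t ω⟫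
        + L / 2 * (η ^ 2 * ‖g t ω + lam • IG t ω (g t ω)‖ ^ 2)) ∂μ :=
      integral_mono (h𝓛int (t+1)) (hint_sub.add hint_q) (fun ω => hpath ω)
    have hsplit : ∫ ω, (𝓛 (θ t ω)
        - η * ⟪gradient 𝓛 (θ t ω) + lam • IG t ω (gradient 𝓛 (θ t ω)), g t ω⟫
        + L / 2 * (η ^ 2 * ‖g t ω + lam • IG t ω (g t ω)‖ ^ 2)) ∂μ
        = ∫ ω, 𝓛 (θ t ω) ∂μ
        - η * ∫ ω, ⟪gradient 𝓛 (θ t ω) + lam • IG t ω (gradient 𝓛 (θ t ω)), g t ω⟫ ∂μ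
        + L / 2 * (η ^ 2 * ∫ ω, ‖g t ω + lam • IG t ω (g t ω)‖ ^ 2 ∂μ) := by
      rw [integral_add hint_sub hint_q,
        integral_sub (h𝓛int t) (hug_int.const_mul η),
        integral_const_mul, integral_const_mul, integral_const_mul]
    -- cross term via conditional expectation
    have hcross : ∫ ω, ⟪gradient 𝓛 (θ t ω) + lam • IG t ω (gradient 𝓛 (θ t ω)), g t ω⟫ ∂μ
        = ∫ ω, ⟪gradient 𝓛 (θ t ω) + lam • IG t ω (gradient 𝓛 (θ t ω)),
            gradient 𝓛 (θ t ω)⟫ ∂μ :=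
      integral_inner_condexp (ℱ.le t) (hu_meas t) (hu2 t) (hg_int t) (hg2 t)
        (hmean t) (hgr2 t)
    have hlower : ∫ ω, ‖gradient 𝓛 (θ t ω)‖ ^ 2 ∂μ
        ≤ ∫ ω, ⟪gradient 𝓛 (θ t ω) + lam • IG t ω (gradient 𝓛 (θ t ω)),
            gradient 𝓛 (θ t ω)⟫ ∂μ := by
      refine integral_mono (hgrnorm2int t) (hinner_int _ _ (hu2 t) (hgr2 t)) fun ω => ?_
      have hpsd := hIG_psd t ω (gradient 𝓛 (θ t ω))
      have hexp : ⟪gradient 𝓛 (θ t ω) + lam • IG t ω (gradient 𝓛 (θ t ω)),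
          gradient 𝓛 (θ t ω)⟫ = ‖gradient 𝓛 (θ t ω)‖ ^ 2
          + lam * ⟪IG t ω (gradient 𝓛 (θ t ω)), gradient 𝓛 (θ t ω)⟫ := by
        rw [inner_add_left, real_inner_smul_left, real_inner_self_eq_norm_sq]
      rw [hexp]
      nlinarith [mul_nonneg hlam hpsd]
    -- second moment bound
    have hcross0 : ∫ ω, ⟪gradient 𝓛 (θ t ω), g t ω⟫ ∂μ
        = ∫ ω, ‖gradient 𝓛 (θ t ω)‖ ^ 2 ∂μ := by
      have h1 := integral_inner_condexp (ℱ.le t) (hgrmeas t) (hgr2 t) (hg_int t) (hg2 t)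
        (hmean t) (hgr2 t)
      rw [h1]
      exact integral_congr_ae (Filter.Eventually.of_forall fun ω =>
        real_inner_self_eq_norm_sq _)
    have hvarle : ∫ ω, ‖g t ω - gradient 𝓛 (θ t ω)‖ ^ 2 ∂μ ≤ σ ^ 2 := by
      have h0 : ∫ ω, ‖g t ω - gradient 𝓛 (θ t ω)‖ ^ 2 ∂μ
          = ∫ ω, (μ[(fun ω => ‖g t ω - gradient 𝓛 (θ t ω)‖ ^ 2)|ℱ t]) ω ∂μ :=
        (integral_condExp (ℱ.le t)).symm
      rw [h0]
      calc ∫ ω, (μ[(fun ω => ‖g t ω - gradient 𝓛 (θ t ω)‖ ^ 2)|ℱ t]) ω ∂μ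
          ≤ ∫ _ω, σ ^ 2 ∂μ := integral_mono_ae integrable_condExp (integrable_const _) (hvar t)
        _ = σ ^ 2 := by simp
    have hgsq : ∫ ω, ‖g t ω‖ ^ 2 ∂μ ≤ ∫ ω, ‖gradient 𝓛 (θ t ω)‖ ^ 2 ∂μ + σ ^ 2 := by
      have hexp : ∀ ω, ‖g t ω‖ ^ 2 = ‖gradient 𝓛 (θ t ω)‖ ^ 2
          + 2 * ⟪gradient 𝓛 (θ t ω), g t ω - gradient 𝓛 (θ t ω)⟫
          + ‖g t ω - gradient 𝓛 (θ t ω)‖ ^ 2 := by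
        intro ω
        have h2 := norm_add_sq_real (gradient 𝓛 (θ t ω)) (g t ω - gradient 𝓛 (θ t ω))
        rw [add_sub_cancel] at h2
        exact h2
      have hcrint : Integrable
          (fun ω => 2 * ⟪gradient 𝓛 (θ t ω), g t ω - gradient 𝓛 (θ t ω)⟫) μ :=
        (hinner_int _ _ (hgr2 t) (he2 t)).const_mul 2
      have hcr : ∫ ω, ⟪gradient 𝓛 (θ t ω), g t ω - gradient 𝓛 (θ t ω)⟫ ∂μ = 0 := by
        have h1 : ∀ ω, ⟪gradient 𝓛 (θ t ω), g t ω - gradient 𝓛 (θ t ω)⟫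
            = ⟪gradient 𝓛 (θ t ω), g t ω⟫ - ‖gradient 𝓛 (θ t ω)‖ ^ 2 := by
          intro ω
          rw [inner_sub_right, real_inner_self_eq_norm_sq]
        rw [integral_congr_ae (Filter.Eventually.of_forall h1),
          integral_sub (hinner_int _ _ (hgr2 t) (hg2 t)) (hgrnorm2int t), hcross0, sub_self]
      calc ∫ ω, ‖g t ω‖ ^ 2 ∂μ
          = ∫ ω, (‖gradient 𝓛 (θ t ω)‖ ^ 2
            + 2 * ⟪gradient 𝓛 (θ t ω), g t ω - gradient 𝓛 (θ t ω)⟫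
            + ‖g t ω - gradient 𝓛 (θ t ω)‖ ^ 2) ∂μ :=
          integral_congr_ae (Filter.Eventually.of_forall hexp)
        _ = ∫ ω, ‖gradient 𝓛 (θ t ω)‖ ^ 2 ∂μ
            + 2 * ∫ ω, ⟪gradient 𝓛 (θ t ω), g t ω - gradient 𝓛 (θ t ω)⟫ ∂μ
            + ∫ ω, ‖g t ω - gradient 𝓛 (θ t ω)‖ ^ 2 ∂μ := by
          have hint_ab : Integrable (fun ω => ‖gradient 𝓛 (θ t ω)‖ ^ 2
              + 2 * ⟪gradient 𝓛 (θ t ω), g t ω - gradient 𝓛 (θ t ω)⟫) μ :=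
            (hgrnorm2int t).add hcrint
          rw [integral_add hint_ab (hvar_int t),
            integral_add (hgrnorm2int t) hcrint, integral_const_mul]
        _ ≤ _ := by rw [hcr]; linarith [hvarle]
    have hPgle : ∫ ω, ‖g t ω + lam • IG t ω (g t ω)‖ ^ 2 ∂μ
        ≤ K ^ 2 * (∫ ω, ‖gradient 𝓛 (θ t ω)‖ ^ 2 ∂μ + σ ^ 2) := by
      have hgsqint : Integrable (fun ω => ‖g t ω‖ ^ 2) μ :=
        (memLp_two_iff_integrable_sq_norm (hg2 t).aestronglyMeasurable).mp (hg2 t)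
      have hpt : ∀ ω, ‖g t ω + lam • IG t ω (g t ω)‖ ^ 2 ≤ K ^ 2 * ‖g t ω‖ ^ 2 := by
        intro ω
        have h1 : ‖g t ω + lam • IG t ω (g t ω)‖ ≤ K * ‖g t ω‖ := by
          have hop := ((IG t ω).le_opNorm (g t ω)).trans
            (mul_le_mul_of_nonneg_right (hIG_norm t ω) (norm_nonneg _))
          calc ‖g t ω + lam • IG t ω (g t ω)‖
              ≤ ‖g t ω‖ + ‖lam • IG t ω (g t ω)‖ := norm_add_le _ _
            _ = ‖g t ω‖ + lam * ‖IG t ω (g t ω)‖ := by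
                rw [norm_smul, Real.norm_eq_abs, abs_of_nonneg hlam]
            _ ≤ ‖g t ω‖ + lam * (G * ‖g t ω‖) := by nlinarith
            _ = K * ‖g t ω‖ := by rw [hKdef]; ring
        nlinarith [norm_nonneg (g t ω + lam • IG t ω (g t ω)), norm_nonneg (g t ω),
          mul_nonneg hK0.le (norm_nonneg (g t ω))]
      calc ∫ ω, ‖g t ω + lam • IG t ω (g t ω)‖ ^ 2 ∂μ
          ≤ ∫ ω, K ^ 2 * ‖g t ω‖ ^ 2 ∂μ :=
          integral_mono hPgsqint (hgsqint.const_mul _) fun ω => hpt ω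
        _ = K ^ 2 * ∫ ω, ‖g t ω‖ ^ 2 ∂μ := integral_const_mul _ _
        _ ≤ _ := mul_le_mul_of_nonneg_left hgsq (sq_nonneg K)
    -- combine
    have hgrnn : 0 ≤ ∫ ω, ‖gradient 𝓛 (θ t ω)‖ ^ 2 ∂μ :=
      integral_nonneg fun ω => sq_nonneg _
    rw [hsplit, hcross] at hInt1
    have hq : L / 2 * (η ^ 2 * ∫ ω, ‖g t ω + lam • IG t ω (g t ω)‖ ^ 2 ∂μ)
        ≤ L / 2 * (η ^ 2 * (K ^ 2 * (∫ ω, ‖gradient 𝓛 (θ t ω)‖ ^ 2 ∂μ + σ ^ 2))) := by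
      have h3 := mul_le_mul_of_nonneg_left hPgle (by positivity : (0:ℝ) ≤ η ^ 2)
      exact mul_le_mul_of_nonneg_left h3 (by linarith : (0:ℝ) ≤ L / 2)
    have hlin : η * ∫ ω, ‖gradient 𝓛 (θ t ω)‖ ^ 2 ∂μ
        ≤ η * ∫ ω, ⟪gradient 𝓛 (θ t ω) + lam • IG t ω (gradient 𝓛 (θ t ω)),
            gradient 𝓛 (θ t ω)⟫ ∂μ :=
      mul_le_mul_of_nonneg_left hlower hηpos.le
    have hηK2 : L / 2 * (η ^ 2 * K ^ 2) ≤ η / 2 := by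
      have h5 := mul_le_mul_of_nonneg_left hηK (by linarith : (0:ℝ) ≤ η / 2)
      nlinarith [h5]
    have hfin : L / 2 * (η ^ 2 * (K ^ 2 * (∫ ω, ‖gradient 𝓛 (θ t ω)‖ ^ 2 ∂μ + σ ^ 2)))
        ≤ η / 2 * ∫ ω, ‖gradient 𝓛 (θ t ω)‖ ^ 2 ∂μ + c := by
      rw [hcdef]
      nlinarith [mul_nonneg (sub_nonneg.mpr hηK2) hgrnn]
    linarith
  -- telescoping
  have hsum : ∀ n : ℕ, ∫ ω, 𝓛 (θ n ω) ∂μ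
      + η / 2 * ∑ t ∈ Finset.range n, (∫ ω, ‖gradient 𝓛 (θ t ω)‖ ^ 2 ∂μ)
      ≤ 𝓛 θ0 + n * c := by
    intro n
    induction n with
    | zero => simp [hθ0]
    | succ n ih =>
      have hst := hstep n
      rw [Finset.sum_range_succ]
      push_cast
      linarith
  have hLstar : Lstar ≤ ∫ ω, 𝓛 (θ T ω) ∂μ := by
    calc Lstar = ∫ _ω, Lstar ∂μ := by simp
      _ ≤ _ := integral_mono (integrable_const _) (h𝓛int T) fun ω => hbdd _
  have hS : η / 2 * ∑ t ∈ Finset.range T, (∫ ω, ‖gradient 𝓛 (θ t ω)‖ ^ 2 ∂μ)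
      ≤ (𝓛 θ0 - Lstar) + T * c := by
    have := hsum T
    linarith
  -- minimum over t
  have key : ∀ hne : (Finset.range T).Nonempty,
      (Finset.range T).inf' hne (fun t => ∫ ω, ‖gradient 𝓛 (θ t ω)‖ ^ 2 ∂μ)
      ≤ (2 * K * L * (𝓛 θ0 - Lstar) + K * σ ^ 2) / s := by
    intro hne
    set M := (Finset.range T).inf' hne (fun t => ∫ ω, ‖gradient 𝓛 (θ t ω)‖ ^ 2 ∂μ) with hM
    have hmin : (T : ℝ) * M ≤ ∑ t ∈ Finset.range T, (∫ ω, ‖gradient 𝓛 (θ t ω)‖ ^ 2 ∂μ) := by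
      have h1 := Finset.card_nsmul_le_sum (Finset.range T)
        (fun t => ∫ ω, ‖gradient 𝓛 (θ t ω)‖ ^ 2 ∂μ) M
        (fun t ht => Finset.inf'_le _ ht)
      simpa [Finset.card_range, nsmul_eq_mul] using h1
    have hkey : η / 2 * ((T : ℝ) * M) ≤ (𝓛 θ0 - Lstar) + T * c := by
      have := mul_le_mul_of_nonneg_left hmin (by positivity : (0:ℝ) ≤ η / 2)
      linarith
    have hKL : K * L ≠ 0 := by positivity
    have e1 : η / 2 * ((T : ℝ) * M) = s / (2 * K * L) * M := by
      rw [hη_def, ← hs2]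
      field_simp
    have e2 : (T : ℝ) * c = σ ^ 2 / (2 * L) := by
      rw [hcdef, hη_def, ← hs2]
      field_simp
    have h1 : s / (2 * K * L) * M ≤ (𝓛 θ0 - Lstar) + σ ^ 2 / (2 * L) := by
      rw [← e1, ← e2]
      exact hkey
    rw [le_div_iff₀ hspos]
    have hscale := mul_le_mul_of_nonneg_left h1 (by positivity : (0:ℝ) ≤ 2 * K * L)
    have e3 : 2 * K * L * (s / (2 * K * L) * M) = M * s := by
      field_simp
    have e4 : 2 * K * L * ((𝓛 θ0 - Lstar) + σ ^ 2 / (2 * L))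
        = 2 * K * L * (𝓛 θ0 - Lstar) + K * σ ^ 2 := by
      field_simp
    rw [e3, e4] at hscale
    linarith
  exact key _
end
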